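/- Let k₁ ≠ 0, k₂, k₃, a₀, c₀ ≠ 0 be real constants with k₁ + k₃ ≠ 0, let τ(t) = 3k₁ t + k₃ > 0 on an interval, with B(t) = b₀ (constant), C(t) = c₀ τ^{−2k₃/(3k₁)−4/3}, and A(t) = (1/(k₁+k₃))τ^{−2k₃/(3k₁)−4/3}(2c₀k₂ + a₀(k₁+k₃)τ^{k₃/(3k₁)+1/3}). Then τ(t)·A'(t)·B(t) − τ(t)·A(t)·B'(t) + 2k₂·B(t)·C(t) + (3k₁+k₃)·A(t)·B(t) = 0 for all t in the interval. -/

import Mathlib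

open Real

theorem stmt14 (k₁ k₂ k₃ a₀ c₀ b₀ : ℝ)
    (hk₁ : k₁ ≠ 0) (hc₀ : c₀ ≠ 0) (h13 : k₁ + k₃ ≠ 0)
    (τ B C A : ℝ → ℝ)
    (hτ : ∀ t, τ t = 3 * k₁ * t + k₃)
    (hB : ∀ t, B t = b₀)
    (hC : ∀ t, C t = c₀ * τ t ^ (-2 * k₃ / (3 * k₁) - 4/3))
    (hA : ∀ t, A t = (1 / (k₁ + k₃)) * τ t ^ (-2 * k₃ / (3 * k₁) - 4/3) *
      (2 * c₀ * k₂ + a₀ * (k₁ + k₃) * τ t ^ (k₃ / (3 * k₁) + 1/3))) :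
    ∀ t, τ t > 0 →
      τ t * deriv A t * B t - τ t * A t * deriv B t
        + 2 * k₂ * B t * C t + (3 * k₁ + k₃) * A t * B t = 0 := by
  set α : ℝ := -2 * k₃ / (3 * k₁) - 4/3 with hα
  set β : ℝ := k₃ / (3 * k₁) + 1/3 with hβ
  intro t ht
  have hT : (0:ℝ) < 3 * k₁ * t + k₃ := by rw [hτ] at ht; exact ht
  have hTne : (3 * k₁ * t + k₃) ≠ 0 := ne_of_gt hT
  have hBd : deriv B t = 0 := by
    rw [show B = fun _ => b₀ from funext hB]; simp
  have hlin : HasDerivAt (fun s : ℝ => 3 * k₁ * s + k₃) (3 * k₁) t := by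
    simpa using ((hasDerivAt_id t).const_mul (3 * k₁)).add_const k₃
  have hg : HasDerivAt (fun s : ℝ => (3 * k₁ * s + k₃) ^ α)
      (3 * k₁ * α * (3 * k₁ * t + k₃) ^ (α - 1)) t :=
    hlin.rpow_const (Or.inl hTne)
  have hh : HasDerivAt (fun s : ℝ => (3 * k₁ * s + k₃) ^ β)
      (3 * k₁ * β * (3 * k₁ * t + k₃) ^ (β - 1)) t :=
    hlin.rpow_const (Or.inl hTne)
  have hsum : HasDerivAt
      (fun s : ℝ => 2 * c₀ * k₂ + a₀ * (k₁ + k₃) * (3 * k₁ * s + k₃) ^ β)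
      (a₀ * (k₁ + k₃) * (3 * k₁ * β * (3 * k₁ * t + k₃) ^ (β - 1))) t :=
    (hh.const_mul _).const_add _
  have hAfun : A = fun s : ℝ => (1 / (k₁ + k₃)) * (3 * k₁ * s + k₃) ^ α *
      (2 * c₀ * k₂ + a₀ * (k₁ + k₃) * (3 * k₁ * s + k₃) ^ β) :=
    funext fun s => by rw [hA, hτ]
  have hAd : HasDerivAt A
      ((1 / (k₁ + k₃)) * (3 * k₁ * α * (3 * k₁ * t + k₃) ^ (α - 1)) *
        (2 * c₀ * k₂ + a₀ * (k₁ + k₃) * (3 * k₁ * t + k₃) ^ β)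
      + (1 / (k₁ + k₃)) * (3 * k₁ * t + k₃) ^ α *
        (a₀ * (k₁ + k₃) * (3 * k₁ * β * (3 * k₁ * t + k₃) ^ (β - 1)))) t := by
    rw [hAfun]
    exact (hg.const_mul _).mul hsum
  rw [hAd.deriv, hBd, hB, hC, hA, hτ]
  rw [Real.rpow_sub_one hTne α, Real.rpow_sub_one hTne β]
  have hαv : α * (3 * k₁) = -(2 * k₃ + 4 * k₁) := by
    rw [hα]; field_simp; ring
  have hβv : β * (3 * k₁) = k₃ + k₁ := by
    rw [hβ]; field_simp
  set T : ℝ := 3 * k₁ * t + k₃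
  set X : ℝ := T ^ α
  set Y : ℝ := T ^ β
  have hTinv : T * T⁻¹ = 1 := mul_inv_cancel₀ hTne
  have hIinv : (k₁ + k₃) * (k₁ + k₃)⁻¹ = 1 := mul_inv_cancel₀ h13
  linear_combination ((k₁ + k₃)⁻¹ * (3 * k₁ * α) * X * (2 * c₀ * k₂ + a₀ * (k₁ + k₃) * Y) * b₀
      + (k₁ + k₃)⁻¹ * X * a₀ * (k₁ + k₃) * (3 * k₁ * β) * Y * b₀) * hTinv
    + ((k₁ + k₃)⁻¹ * X * (2 * c₀ * k₂ + a₀ * (k₁ + k₃) * Y) * b₀) * hαv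
    + ((k₁ + k₃)⁻¹ * X * a₀ * (k₁ + k₃) * Y * b₀) * hβv
    + (-(X * (2 * c₀ * k₂ + a₀ * (k₁ + k₃) * Y) * b₀) + X * a₀ * (k₁ + k₃) * Y * b₀) * hIinv
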